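/- The function w ↦ (tan(w/2))^{1/2} (principal branch of the square root) tends to exp(−iπ/4) as Im(w) → −∞, uniformly in Re(w); precisely, it tends to exp(−iπ/4) along the filter comap Im atBot. Consequently the opposite branch −(tan(w/2))^{1/2} tends to −exp(−iπ/4). -/

import Mathlib

open Filter Complex in
private lemma tan_half_eq' {w : ℂ} (hw : w.im < 0) :
    Complex.tan (w / 2)
      = (1 - Complex.exp (-Complex.I * w)) / (Complex.I * (1 + Complex.exp (-Complex.I * w))) := by
  have hcos : Complex.cos (w / 2) ≠ 0 := by
    rw [Ne, Complex.cos_eq_zero_iff]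
    rintro ⟨k, hk⟩
    have him : (w / 2).im = 0 := by rw [hk]; simp
    simp only [Complex.div_ofNat_im] at him
    linarith
  have hden : (1 : ℂ) + Complex.exp (-Complex.I * w) ≠ 0 := by
    intro h
    have h1 : Complex.exp (-Complex.I * w) = -1 := by linear_combination h
    have habs : ‖Complex.exp (-Complex.I * w)‖ = 1 := by rw [h1]; simp
    rw [Complex.norm_exp] at habs
    have hre : (-Complex.I * w).re = w.im := by simp [Complex.mul_re]
    rw [hre] at habs
    nlinarith [Real.exp_lt_one_iff (x := w.im) |>.mpr hw]
  rw [Complex.tan_eq_sin_div_cos, Complex.sin, Complex.cos]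
  rw [Complex.cos] at hcos
  have hmul : Complex.exp (-(w / 2) * Complex.I) * Complex.exp (w / 2 * Complex.I) = 1 := by
    rw [← Complex.exp_add]; ring_nf; exact Complex.exp_zero
  have hsq : Complex.exp (-(w / 2) * Complex.I) ^ 2 = Complex.exp (-Complex.I * w) := by
    rw [← Complex.exp_nat_mul]; ring_nf
  rw [div_eq_div_iff hcos (mul_ne_zero Complex.I_ne_zero hden)]
  linear_combination (-Complex.exp (w/2*Complex.I)) * hsq + Complex.exp (-(w/2)*Complex.I) * hmul + ((Complex.exp (-(w/2)*Complex.I) - Complex.exp (w/2*Complex.I)) * (1 + Complex.exp (-Complex.I*w)) / 2) * Complex.I_sq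

open Filter Complex in
private lemma sqrt_tan_half_tendsto_aux :
    Filter.Tendsto (fun w : ℂ => Complex.tan (w / 2) ^ ((1 : ℂ) / 2))
      (Filter.comap Complex.im Filter.atBot)
      (nhds (Complex.exp (-(Real.pi / 4 : ℝ) * Complex.I))) := by
  have hu : Tendsto (fun w : ℂ => Complex.exp (-Complex.I * w)) (comap Complex.im atBot) (nhds 0) := by
    rw [tendsto_zero_iff_norm_tendsto_zero]
    have h : (fun w : ℂ => ‖Complex.exp (-Complex.I * w)‖) = fun w => Real.exp w.im := by
      funext w
      rw [Complex.norm_exp]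
      congr 1
      simp [Complex.mul_re]
    rw [h]
    exact Real.tendsto_exp_atBot.comp tendsto_comap
  have htan : Tendsto (fun w : ℂ => Complex.tan (w / 2)) (comap Complex.im atBot) (nhds (-Complex.I)) := by
    have hg : Tendsto (fun w : ℂ => (1 - Complex.exp (-Complex.I * w)) /
        (Complex.I * (1 + Complex.exp (-Complex.I * w)))) (comap Complex.im atBot)
        (nhds ((1 - 0) / (Complex.I * (1 + 0)))) := by
      apply Tendsto.div (tendsto_const_nhds.sub hu)
        (tendsto_const_nhds.mul (tendsto_const_nhds.add hu))
      simp [Complex.I_ne_zero]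
    have hval : (1 - 0 : ℂ) / (Complex.I * (1 + 0)) = -Complex.I := by
      field_simp
      simp
    rw [hval] at hg
    refine hg.congr' ?_
    have hev : ∀ᶠ w : ℂ in comap Complex.im atBot, w.im < 0 :=
      (tendsto_comap (f := Complex.im)).eventually (eventually_lt_atBot 0)
    filter_upwards [hev] with w hw
    exact (tan_half_eq' hw).symm
  have hcont : ContinuousAt (fun z : ℂ => z ^ ((1:ℂ)/2)) (-Complex.I) := by
    apply continuousAt_cpow_const
    rw [Complex.mem_slitPlane_iff]
    right; simp
  have h := hcont.tendsto.comp htan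
  have hval : (-Complex.I) ^ ((1:ℂ)/2) = Complex.exp (-(Real.pi / 4 : ℝ) * Complex.I) := by
    rw [Complex.cpow_def_of_ne_zero (by simp [Complex.I_ne_zero]), Complex.log_neg_I]
    congr 1
    push_cast
    ring
  rwa [hval] at h

/-- `w ↦ (tan (w/2))^(1/2)` (principal square root) tends to `exp(−iπ/4)` as
`Im w → −∞` (along `comap Im atBot`); consequently the opposite branch
`−(tan (w/2))^(1/2)` tends to `−exp(−iπ/4)`. -/
theorem sqrt_tan_half_tendsto_atBot_im :
    Filter.Tendsto (fun w : ℂ => Complex.tan (w / 2) ^ ((1 : ℂ) / 2))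
      (Filter.comap Complex.im Filter.atBot)
      (nhds (Complex.exp (-(Real.pi / 4 : ℝ) * Complex.I))) ∧
    Filter.Tendsto (fun w : ℂ => -(Complex.tan (w / 2) ^ ((1 : ℂ) / 2)))
      (Filter.comap Complex.im Filter.atBot)
      (nhds (-Complex.exp (-(Real.pi / 4 : ℝ) * Complex.I))) :=
  ⟨sqrt_tan_half_tendsto_aux, sqrt_tan_half_tendsto_aux.neg⟩
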